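/- Let w_k = 3^{−1/4}·e^{−(2k+1)πi/4} for k = 1, 2, 3, 4, and let z(w) = (w² − 1/3)/(w(w² − 1)). Then the four branch points are: z(w₁) = 3^{−1/4}e^{7πi/12}, z(w₂) = 3^{−1/4}e^{17πi/12}, z(w₃) = 3^{−1/4}e^{19πi/12}, and z(w₄) = 3^{−1/4}e^{5πi/12}. -/

import Mathlib

/-- The rational map z(w) = (w² − 1/3)/(w(w² − 1)). -/
noncomputable def zmap (w : ℂ) : ℂ := (w ^ 2 - 1 / 3) / (w * (w ^ 2 - 1))

/-- The positive real fourth root of 1/3, as a complex number. -/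
noncomputable def c3 : ℂ := (((3 : ℝ) ^ (-(1 / 4) : ℝ) : ℝ) : ℂ)

/-- The critical points w_k = 3^{−1/4}·e^{−(2k+1)πi/4}. -/
noncomputable def wk (k : ℕ) : ℂ :=
  c3 * Complex.exp (-(2 * (k : ℂ) + 1) * Real.pi * Complex.I / 4)

/-! ### Auxiliary definitions -/

noncomputable def sC : ℂ := ((Real.sqrt 3 : ℝ) : ℂ)
noncomputable def pC : ℂ := ((Real.sqrt 2 : ℝ) : ℂ)
noncomputable def AC : ℂ := pC / 2 * (1 + Complex.I)
noncomputable def bC : ℂ := (sC + Complex.I) / 2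
noncomputable def WC : ℂ := c3 * AC

lemma hsC : sC ^ 2 = 3 := by
  unfold sC; norm_cast; exact Real.sq_sqrt (by norm_num)

lemma hpC : pC ^ 2 = 2 := by
  unfold pC; norm_cast; exact Real.sq_sqrt (by norm_num)

lemma hc3sC : c3 ^ 2 * sC = 1 := by
  have hr : ((3:ℝ) ^ (-(1/4) : ℝ)) ^ (2:ℕ) * Real.sqrt 3 = 1 := by
    rw [← Real.rpow_natCast ((3:ℝ) ^ (-(1/4):ℝ)) 2,
      ← Real.rpow_mul (by norm_num : (0:ℝ) ≤ 3), Real.sqrt_eq_rpow,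
      ← Real.rpow_add (by norm_num : (0:ℝ) < 3)]
    norm_num
  unfold c3 sC
  rw [← Complex.ofReal_pow, ← Complex.ofReal_mul, hr, Complex.ofReal_one]

lemma hWC : WC ^ 2 * sC = Complex.I := by
  unfold WC AC
  linear_combination (c3^2 * (1+Complex.I)^2 * sC / 4) * hpC
    + (c3^2 * sC / 2) * Complex.I_sq + Complex.I * hc3sC

lemma hA3 : AC ^ 3 = Complex.I * AC := by
  unfold AC
  linear_combination (pC * (1+Complex.I)^3 / 8) * hpC
    + (pC * (1+Complex.I) / 4) * Complex.I_sq

lemma hW0 : WC ≠ 0 := by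
  intro h
  have := hWC
  rw [h] at this
  simp at this
  exact Complex.I_ne_zero this.symm

lemma hn1 : WC ^ 2 ≠ 1 := by
  intro h
  have h1 := hWC
  rw [h, one_mul] at h1
  unfold sC at h1
  have := congrArg Complex.im h1
  simp at this

lemma hn2 : WC ^ 2 ≠ -1 := by
  intro h
  have h1 := hWC
  rw [h] at h1
  unfold sC at h1
  have := congrArg Complex.im h1
  simp at this

/-! ### Exponential values -/

lemma h4 : Complex.exp ((Real.pi : ℂ) * Complex.I / 4) = AC := by
  rw [show ((Real.pi : ℂ) * Complex.I / 4) = ((Real.pi / 4 : ℝ) : ℂ) * Complex.I by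
    push_cast; ring]
  rw [Complex.exp_mul_I, ← Complex.ofReal_cos, ← Complex.ofReal_sin,
    Real.cos_pi_div_four, Real.sin_pi_div_four]
  unfold AC pC
  push_cast; ring

lemma h6 : Complex.exp ((Real.pi : ℂ) * Complex.I / 6) = bC := by
  rw [show ((Real.pi : ℂ) * Complex.I / 6) = ((Real.pi / 6 : ℝ) : ℂ) * Complex.I by
    push_cast; ring]
  rw [Complex.exp_mul_I, ← Complex.ofReal_cos, ← Complex.ofReal_sin,
    Real.cos_pi_div_six, Real.sin_pi_div_six]
  unfold bC sC
  push_cast; ring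

lemma hwk1 : wk 1 = -WC := by
  unfold wk
  rw [show ((1:ℕ):ℂ) = 1 by norm_num]
  rw [show (-(2 * (1:ℂ) + 1) * (Real.pi:ℂ) * Complex.I / 4)
      = (Real.pi:ℂ) * Complex.I / 4 - (Real.pi:ℂ) * Complex.I by ring]
  rw [Complex.exp_sub, Complex.exp_pi_mul_I, h4]
  unfold WC; ring

lemma hwk2 : wk 2 = Complex.I * WC := by
  unfold wk
  rw [show ((2:ℕ):ℂ) = 2 by norm_num]
  rw [show (-(2 * (2:ℂ) + 1) * (Real.pi:ℂ) * Complex.I / 4)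
      = ((Real.pi:ℂ) * Complex.I / 4 + ((Real.pi:ℂ) * Complex.I / 4 + (Real.pi:ℂ) * Complex.I / 4))
        - ((Real.pi:ℂ) * Complex.I + (Real.pi:ℂ) * Complex.I) by ring]
  rw [Complex.exp_sub, Complex.exp_add, Complex.exp_add, Complex.exp_add,
    Complex.exp_pi_mul_I, h4]
  unfold WC
  have h := hA3
  field_simp
  linear_combination c3 * h
lemma hwk3 : wk 3 = WC := by
  unfold wk
  rw [show ((3:ℕ):ℂ) = 3 by norm_num]
  rw [show (-(2 * (3:ℂ) + 1) * (Real.pi:ℂ) * Complex.I / 4)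
      = (Real.pi:ℂ) * Complex.I / 4 - ((Real.pi:ℂ) * Complex.I + (Real.pi:ℂ) * Complex.I) by ring]
  rw [Complex.exp_sub, Complex.exp_add, Complex.exp_pi_mul_I, h4]
  unfold WC; ring

lemma hwk4 : wk 4 = -(Complex.I * WC) := by
  unfold wk
  rw [show ((4:ℕ):ℂ) = 4 by norm_num]
  rw [show (-(2 * (4:ℂ) + 1) * (Real.pi:ℂ) * Complex.I / 4)
      = ((Real.pi:ℂ) * Complex.I / 4 + ((Real.pi:ℂ) * Complex.I / 4 + (Real.pi:ℂ) * Complex.I / 4))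
        - ((Real.pi:ℂ) * Complex.I + ((Real.pi:ℂ) * Complex.I + (Real.pi:ℂ) * Complex.I)) by ring]
  rw [Complex.exp_sub, Complex.exp_add, Complex.exp_add, Complex.exp_add, Complex.exp_add,
    Complex.exp_pi_mul_I, h4]
  unfold WC
  have h := hA3
  field_simp
  linear_combination (-c3) * h

lemma hE7 : c3 * Complex.exp (7 * (Real.pi:ℂ) * Complex.I / 12) = WC * bC * bC := by
  rw [show (7 * (Real.pi:ℂ) * Complex.I / 12)
      = (Real.pi:ℂ) * Complex.I / 4 + ((Real.pi:ℂ) * Complex.I / 6 + (Real.pi:ℂ) * Complex.I / 6) by ring]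
  rw [Complex.exp_add, Complex.exp_add, h4, h6]
  unfold WC; ring

lemma hE17 : c3 * Complex.exp (17 * (Real.pi:ℂ) * Complex.I / 12) = -(WC * bC) := by
  rw [show (17 * (Real.pi:ℂ) * Complex.I / 12)
      = (Real.pi:ℂ) * Complex.I / 4 + ((Real.pi:ℂ) * Complex.I / 6 + (Real.pi:ℂ) * Complex.I) by ring]
  rw [Complex.exp_add, Complex.exp_add, h4, h6, Complex.exp_pi_mul_I]
  unfold WC; ring

lemma hE19 : c3 * Complex.exp (19 * (Real.pi:ℂ) * Complex.I / 12) = -(WC * bC * bC) := by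
  rw [show (19 * (Real.pi:ℂ) * Complex.I / 12)
      = (Real.pi:ℂ) * Complex.I / 4 + ((Real.pi:ℂ) * Complex.I / 6 + ((Real.pi:ℂ) * Complex.I / 6 + (Real.pi:ℂ) * Complex.I)) by ring]
  rw [Complex.exp_add, Complex.exp_add, Complex.exp_add, h4, h6, Complex.exp_pi_mul_I]
  unfold WC; ring

lemma hE5 : c3 * Complex.exp (5 * (Real.pi:ℂ) * Complex.I / 12) = WC * bC := by
  rw [show (5 * (Real.pi:ℂ) * Complex.I / 12)
      = (Real.pi:ℂ) * Complex.I / 4 + (Real.pi:ℂ) * Complex.I / 6 by ring]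
  rw [Complex.exp_add, h4, h6]
  unfold WC; ring

/-! ### The main computation -/

lemma zmap_formula (w B : ℂ) (hw : w ≠ 0) (h2 : w ^ 2 - 1 ≠ 0)
    (hkey : w ^ 2 - 1/3 = B * (w * (w ^ 2 - 1))) : zmap w = B := by
  unfold zmap
  rw [show w ^ 2 - 1 / 3 = B * (w * (w ^ 2 - 1)) from hkey]
  exact mul_div_cancel_right₀ B (mul_ne_zero hw h2)

lemma z1 : zmap (-WC) = WC * bC * bC := by
  apply zmap_formula
  · exact neg_ne_zero.mpr hW0
  · intro h; exact hn1 (by linear_combination h)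
  · unfold bC
    linear_combination ((WC^2-1)/2*Complex.I + Complex.I/3 + (WC^2*sC - Complex.I)/6) * hWC
      + ((WC^4-WC^2)/4 - WC^4/6) * hsC
      + ((WC^2-1)/2 + (WC^4-WC^2)/4 + 1/6) * Complex.I_sq

lemma z2 : zmap (Complex.I * WC) = -(WC * bC) := by
  apply zmap_formula
  · exact mul_ne_zero Complex.I_ne_zero hW0
  · intro h
    exact hn2 (by linear_combination (-1) * h + WC^2 * Complex.I_sq)
  · unfold bC
    linear_combination (-(Complex.I/2)*(WC^2+1) + Complex.I/3 + (WC^2*sC - Complex.I)/6) * hWC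
      + (-(WC^4)/6) * hsC
      + (1/6 + WC^2 - (WC^2+1)/2 - (WC^4+WC^2)/2 + (Complex.I/2)*(sC+Complex.I)*WC^4) * Complex.I_sq

lemma z3 : zmap WC = -(WC * bC * bC) := by
  apply zmap_formula
  · exact hW0
  · intro h; exact hn1 (by linear_combination h)
  · unfold bC
    linear_combination ((WC^2-1)/2*Complex.I + Complex.I/3 + (WC^2*sC - Complex.I)/6) * hWC
      + ((WC^4-WC^2)/4 - WC^4/6) * hsC
      + ((WC^2-1)/2 + (WC^4-WC^2)/4 + 1/6) * Complex.I_sq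

lemma z4 : zmap (-(Complex.I * WC)) = WC * bC := by
  apply zmap_formula
  · exact neg_ne_zero.mpr (mul_ne_zero Complex.I_ne_zero hW0)
  · intro h
    exact hn2 (by linear_combination (-1) * h + WC^2 * Complex.I_sq)
  · unfold bC
    linear_combination (-(Complex.I/2)*(WC^2+1) + Complex.I/3 + (WC^2*sC - Complex.I)/6) * hWC
      + (-(WC^4)/6) * hsC
      + (1/6 + WC^2 - (WC^2+1)/2 - (WC^4+WC^2)/2 + (Complex.I/2)*(sC+Complex.I)*WC^4) * Complex.I_sq

theorem branch_points_values :
    zmap (wk 1) = c3 * Complex.exp (7 * Real.pi * Complex.I / 12) ∧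
    zmap (wk 2) = c3 * Complex.exp (17 * Real.pi * Complex.I / 12) ∧
    zmap (wk 3) = c3 * Complex.exp (19 * Real.pi * Complex.I / 12) ∧
    zmap (wk 4) = c3 * Complex.exp (5 * Real.pi * Complex.I / 12) := by
  refine ⟨?_, ?_, ?_, ?_⟩
  · rw [hwk1, hE7]; exact z1
  · rw [hwk2, hE17]; exact z2
  · rw [hwk3, hE19]; exact z3
  · rw [hwk4, hE5]; exact z4
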